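/- arXiv:1702.06447 — 4 statements merged into one kernel-verified Lean document; each statement's English description precedes it below -/
import Mathlib

section
/- Let A be a finite-dimensional F-algebra, K/F a field extension, and M a finitely generated module over A_K = K ⊗_F A. Then there exists an intermediate field F ⊆ E ⊆ K with E finitely generated over F such that M descends to E, i.e., M ≅ K ⊗_E M₀ for some A_E-module M₀. -/
open TensorProduct


/-- If an `R`-basis of `M` maps to an `S`-basis of `N` under `f`, then `f` exhibits `N`
as the base change of `M` along `R → S`. -/
theorem isBaseChange_of_basis {R S M N ι : Type*} [CommRing R] [CommRing S] [Algebra R S]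
    [AddCommGroup M] [Module R M] [AddCommGroup N] [Module R N] [Module S N]
    [IsScalarTower R S N] (f : M →ₗ[R] N) (b : Module.Basis ι R M) (bN : Module.Basis ι S N)
    (hfb : ∀ i, f (b i) = bN i) : IsBaseChange S f := by
  delta IsBaseChange IsTensorProduct
  set F := (((Algebra.linearMap S <| Module.End S (M →ₗ[R] N)).flip f).restrictScalars R) with hF
  have hFval : ∀ (s : S) (m : M), TensorProduct.lift F (s ⊗ₜ m) = s • f m := by
    intro s m
    simp [hF, Module.algebraMap_end_apply]
  let e : S ⊗[R] M ≃ₗ[S] N := (b.baseChange S).equiv bN (Equiv.refl ι)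
  have key : ∀ m : M, e (1 ⊗ₜ m) = f m := by
    have : ((e.toLinearMap.restrictScalars R).comp (TensorProduct.mk R S M 1)) = f := by
      apply b.ext
      intro i
      simp only [LinearMap.coe_comp, LinearMap.coe_restrictScalars, Function.comp_apply,
        TensorProduct.mk_apply, hfb]
      have : (1 : S) ⊗ₜ[R] b i = (b.baseChange S) i := (b.baseChange_apply S i).symm
      rw [this]
      exact ((Module.Basis.baseChange S b).equiv_apply i bN (Equiv.refl ι)).trans rfl
    intro m
    exact congrArg (· m) congr(⇑$this)
  have : (TensorProduct.lift F) = (e.toLinearMap.restrictScalars R) := by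
    apply TensorProduct.ext'
    intro s m
    rw [hFval]
    have : (s ⊗ₜ[R] m : S ⊗[R] M) = s • (1 ⊗ₜ[R] m) := by
      rw [TensorProduct.smul_tmul', smul_eq_mul, mul_one]
    simp only [LinearMap.coe_restrictScalars, LinearEquiv.coe_coe, this, map_smul, key]
  rw [this]
  exact e.bijective

/-- `M` (a module over `A_K = K ⊗_F A`, encoded as a `K`-module with a commuting
`A`-action, both compatible with the `F`-structure) descends to the intermediate
field `E` of `K/F`: there is an `A`-stable `E`-form `N ⊆ M` such that the natural
map `K ⊗_E N → M` is an isomorphism, i.e. `M ≅ K ⊗_E N` as `A_K`-modules. -/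
def DescendsTo (F K A : Type) [Field F] [Field K] [Algebra F K]
    [Ring A] [Algebra F A]
    (M : Type) [AddCommGroup M] [Module F M] [Module K M] [Module A M]
    [IsScalarTower F K M] [IsScalarTower F A M] [SMulCommClass K A M]
    (E : IntermediateField F K) : Prop :=
  ∃ N : Submodule E M, (∀ (a : A) (x : M), x ∈ N → a • x ∈ N) ∧
    IsBaseChange K N.subtype

/-- Every finitely generated module over `A_K` descends to an
intermediate field `E` that is finitely generated over `F`. -/
theorem descends_to_finitelyGenerated_subfield
    (F K A : Type) [Field F] [Field K] [Algebra F K]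
    [Ring A] [Algebra F A] [FiniteDimensional F A]
    (M : Type) [AddCommGroup M] [Module F M] [Module K M] [Module A M]
    [IsScalarTower F K M] [IsScalarTower F A M] [SMulCommClass K A M]
    [Module.Finite K M] :
    ∃ E : IntermediateField F K, E.FG ∧ DescendsTo F K A M E := by
  let b : Module.Basis (Fin (Module.finrank K M)) K M := Module.finBasis K M
  let aB : Module.Basis (Fin (Module.finrank F A)) F A := Module.finBasis F A
  let c : Fin (Module.finrank F A) × Fin (Module.finrank K M) × Fin (Module.finrank K M) → K :=
    fun p => b.repr (aB p.1 • b p.2.1) p.2.2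
  let E : IntermediateField F K := IntermediateField.adjoin F (Set.range c)
  have hcE : ∀ p, c p ∈ E := fun p => IntermediateField.subset_adjoin F _ ⟨p, rfl⟩
  refine ⟨E, ⟨(Set.finite_range c).toFinset, by rw [Set.Finite.coe_toFinset]⟩, ?_⟩
  let N : Submodule E M := Submodule.span E (Set.range ⇑b)
  have hsmul : ∀ (e : E) (m : M), e • m = (e : K) • m := fun e m => rfl
  have hsm : ∀ (x : K), x ∈ E → ∀ m ∈ N, x • m ∈ N := by
    intro x hx m hm
    have := N.smul_mem ⟨x, hx⟩ hm
    rwa [hsmul] at this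
  have hbN : ∀ j, b j ∈ N := fun j => Submodule.subset_span ⟨j, rfl⟩
  have hstep : ∀ i j, aB i • b j ∈ N := by
    intro i j
    rw [← b.sum_repr (aB i • b j)]
    exact Submodule.sum_mem _ fun k _ => hsm _ (hcE (i, j, k)) _ (hbN k)
  have hstab : ∀ (a : A) (x : M), x ∈ N → a • x ∈ N := by
    intro a x hx
    induction hx using Submodule.span_induction with
    | mem y hy =>
      obtain ⟨j, rfl⟩ := hy
      rw [← aB.sum_repr a, Finset.sum_smul]
      refine Submodule.sum_mem _ fun i _ => ?_
      rw [smul_assoc, ← algebraMap_smul K (aB.repr a i) (aB i • b j)]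
      exact hsm _ (E.algebraMap_mem _) _ (hstep i j)
    | zero => rw [smul_zero]; exact N.zero_mem
    | add y z _ _ ihy ihz => rw [smul_add]; exact N.add_mem ihy ihz
    | smul e y _ ih =>
      rw [hsmul, ← smul_comm]
      exact hsm _ e.2 _ ih
  haveI : FaithfulSMul E K :=
    (faithfulSMul_iff_algebraMap_injective E K).mpr (algebraMap E K).injective
  haveI : Module.IsTorsionFree E K := FaithfulSMul.to_isTorsionFree E K
  let bN : Module.Basis _ E N := b.restrictScalars E
  exact ⟨N, hstab, isBaseChange_of_basis N.subtype bN b fun i => b.restrictScalars_apply E i⟩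
end

section
/- Let A be the rational quaternion algebra A = ℚ⟨x,y⟩/(x² = y² = -1, xy = -yx), K/ℚ a field extension of characteristic 0, and M the 2-dimensional A_K-module given by x ↦ [[a,b],[b,-a]], y ↦ [[b,-a],[-a,-b]] for elements a, b ∈ K with a² + b² = -1. For an intermediate field ℚ ⊆ E ⊆ K, the following are equivalent: (a) M descends to E; (b) the quaternion algebra A splits over E; (c) there exist a₀, b₀ ∈ E with a₀² + b₀² = -1. -/
open TensorProduct Quaternion Matrix

/-! ### Auxiliary definitions and lemmas -/

/-- The distinguished quaternion `i` in `ℍ[ℚ]`. -/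
def quatI : ℍ[ℚ] := ⟨0, 1, 0, 0⟩

/-- The distinguished quaternion `j` in `ℍ[ℚ]`. -/
def quatJ : ℍ[ℚ] := ⟨0, 0, 1, 0⟩

lemma quatI_mul_quatI : quatI * quatI = -1 := by ext <;> simp only [Quaternion.re_mul, Quaternion.imI_mul, Quaternion.imJ_mul, Quaternion.imK_mul] <;> simp [quatI]

lemma quatJ_mul_quatJ : quatJ * quatJ = -1 := by ext <;> simp only [Quaternion.re_mul, Quaternion.imI_mul, Quaternion.imJ_mul, Quaternion.imK_mul] <;> simp [quatJ]

lemma quatI_mul_quatJ_anticomm : quatI * quatJ = -(quatJ * quatI) := by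
  ext <;> simp only [Quaternion.re_mul, Quaternion.imI_mul, Quaternion.imJ_mul, Quaternion.imK_mul, Quaternion.re_neg, Quaternion.imI_neg, Quaternion.imJ_neg, Quaternion.imK_neg] <;> simp [quatI, quatJ]

lemma quat_decomp (x y z w : ℚ) : (⟨x, y, z, w⟩ : ℍ[ℚ]) =
    x • (1 : ℍ[ℚ]) + y • quatI + z • quatJ + w • (quatI * quatJ) := by
  ext <;> simp only [Quaternion.re_mul, Quaternion.imI_mul, Quaternion.imJ_mul, Quaternion.imK_mul, Quaternion.re_add, Quaternion.imI_add, Quaternion.imJ_add, Quaternion.imK_add, Quaternion.re_smul, Quaternion.imI_smul, Quaternion.imJ_smul, Quaternion.imK_smul] <;> simp [quatI, quatJ]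

/-- From a pair of anticommuting square roots of `-1` in `Mat₂(F)` one can extract a
representation of `-1` as a sum of two squares in `F`. -/
lemma sq_pair_of_anticommuting {F : Type} [Field F]
    (u v : Matrix (Fin 2) (Fin 2) F) (hu : u * u = -1) (hv : v * v = -1)
    (huv : u * v = -(v * u)) : ∃ a₀ b₀ : F, a₀ ^ 2 + b₀ ^ 2 = -1 := by
  have e00 := congrFun (congrFun hu 0) 0
  have f00 := congrFun (congrFun hv 0) 0
  have g00 := congrFun (congrFun huv 0) 0
  simp only [Matrix.mul_apply, Fin.sum_univ_two, Matrix.neg_apply, Matrix.one_apply,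
    if_true] at e00 f00 g00
  by_cases hr : u 1 0 = 0
  · exact ⟨u 0 0, 0, by rw [hr] at e00; linear_combination e00⟩
  · refine ⟨v 1 0 / u 1 0, (u 1 0 * v 0 0 - u 0 0 * v 1 0) / u 1 0, ?_⟩
    field_simp
    linear_combination (v 1 0 ^ 2) * e00 + (u 1 0 ^ 2) * f00 - (u 1 0 * v 1 0) * g00

variable (F : Type) [Field F] [Algebra ℚ F]

/-- A quaternionic basis of `Mat₂(F)` built from a solution of `a₀² + b₀² = -1`. -/
def quatBasis (a₀ b₀ : F) (h : a₀ ^ 2 + b₀ ^ 2 = -1) :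
    QuaternionAlgebra.Basis (Matrix (Fin 2) (Fin 2) F) (-1 : ℚ) 0 (-1) where
  i := !![a₀, b₀; b₀, -a₀]
  j := !![b₀, -a₀; -a₀, -b₀]
  k := !![0, 1; -1, 0]
  i_mul_i := by
    ext i j
    fin_cases i <;> fin_cases j <;>
      simp [Matrix.mul_apply, Fin.sum_univ_two, Rat.smul_one_eq_cast] <;>
      (first | ring1 | linear_combination h | linear_combination -h)
  j_mul_j := by
    ext i j
    fin_cases i <;> fin_cases j <;>
      simp [Matrix.mul_apply, Fin.sum_univ_two, Rat.smul_one_eq_cast] <;>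
      (first | ring1 | linear_combination h | linear_combination -h)
  i_mul_j := by
    ext i j
    fin_cases i <;> fin_cases j <;>
      simp [Matrix.mul_apply, Fin.sum_univ_two] <;>
      (first | ring1 | linear_combination h | linear_combination -h)
  j_mul_i := by
    ext i j
    fin_cases i <;> fin_cases j <;>
      simp [Matrix.mul_apply, Fin.sum_univ_two] <;>
      (first | ring1 | linear_combination h | linear_combination -h)

/-- The two-dimensional representation of `ℍ[ℚ]` over `F` attached to a solution of
`a₀² + b₀² = -1`. -/
noncomputable def quatRep (a₀ b₀ : F) (h : a₀ ^ 2 + b₀ ^ 2 = -1) :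
    ℍ[ℚ] →ₐ[ℚ] Matrix (Fin 2) (Fin 2) F :=
  (quatBasis F a₀ b₀ h).liftHom

lemma quatRep_apply (a₀ b₀ : F) (h : a₀ ^ 2 + b₀ ^ 2 = -1) (x y z w : ℚ) :
    quatRep F a₀ b₀ h ⟨x, y, z, w⟩ =
      !![algebraMap ℚ F x + algebraMap ℚ F y * a₀ + algebraMap ℚ F z * b₀,
         algebraMap ℚ F y * b₀ - algebraMap ℚ F z * a₀ + algebraMap ℚ F w;
         algebraMap ℚ F y * b₀ - algebraMap ℚ F z * a₀ - algebraMap ℚ F w,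
         algebraMap ℚ F x - algebraMap ℚ F y * a₀ - algebraMap ℚ F z * b₀] := by
  have h1 : quatRep F a₀ b₀ h ⟨x, y, z, w⟩ =
      algebraMap ℚ _ x + y • (quatBasis F a₀ b₀ h).i + z • (quatBasis F a₀ b₀ h).j
        + w • (quatBasis F a₀ b₀ h).k := rfl
  rw [h1]
  have hi : (quatBasis F a₀ b₀ h).i = !![a₀, b₀; b₀, -a₀] := rfl
  have hj : (quatBasis F a₀ b₀ h).j = !![b₀, -a₀; -a₀, -b₀] := rfl
  have hk : (quatBasis F a₀ b₀ h).k = !![0, 1; -1, 0] := rfl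
  rw [hi, hj, hk]
  ext i j
  fin_cases i <;> fin_cases j <;>
    simp [Matrix.algebraMap_matrix_apply, Matrix.smul_apply] <;>
    simp [Algebra.smul_def] <;> ring

/-- If `-1 = a₀² + b₀²` in `F`, then the quaternions split over `F`. -/
noncomputable def splitIso (a₀ b₀ : F) (h : a₀ ^ 2 + b₀ ^ 2 = -1) :
    (F ⊗[ℚ] ℍ[ℚ]) ≃ₐ[F] Matrix (Fin 2) (Fin 2) F := by
  haveI : CharZero F := charZero_of_injective_algebraMap (algebraMap ℚ F).injective
  let g := quatRep F a₀ b₀ h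
  let f : (F ⊗[ℚ] ℍ[ℚ]) →ₐ[F] Matrix (Fin 2) (Fin 2) F :=
    Algebra.TensorProduct.lift (Algebra.ofId F _) g
      (fun x y => by rw [Algebra.ofId_apply]; exact Algebra.commute_algebraMap_left x (g y))
  have bT : Module.Basis (Fin 4) F (F ⊗[ℚ] ℍ[ℚ]) :=
    Module.Basis.baseChange F (QuaternionAlgebra.basisOneIJK (-1 : ℚ) 0 (-1))
  haveI : FiniteDimensional F (F ⊗[ℚ] ℍ[ℚ]) := Module.Basis.finiteDimensional_of_finite bT
  have hfr : Module.finrank F (F ⊗[ℚ] ℍ[ℚ])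
      = Module.finrank F (Matrix (Fin 2) (Fin 2) F) := by
    rw [Module.finrank_eq_card_basis bT]
    simp [Module.finrank_matrix]
  have hsurj : Function.Surjective f := by
    intro m
    obtain ⟨n00, n01, n10, n11, rfl⟩ : ∃ p q r s, m = !![p, q; r, s] :=
      ⟨m 0 0, m 0 1, m 1 0, m 1 1, Matrix.eta_fin_two m⟩
    refine ⟨(TensorProduct.tmul ℚ (N := ℍ[ℚ]) ((n00 + n11) / 2) (@id ℍ[ℚ] ⟨1,0,0,0⟩))
      + (TensorProduct.tmul ℚ (N := ℍ[ℚ]) (-(a₀ * ((n00 - n11)/2) + b₀ * ((n01 + n10)/2))) (@id ℍ[ℚ] ⟨0,1,0,0⟩))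
      + (TensorProduct.tmul ℚ (N := ℍ[ℚ]) (-(b₀ * ((n00 - n11)/2) - a₀ * ((n01 + n10)/2))) (@id ℍ[ℚ] ⟨0,0,1,0⟩))
      + (TensorProduct.tmul ℚ (N := ℍ[ℚ]) ((n01 - n10) / 2) (@id ℍ[ℚ] ⟨0,0,0,1⟩)), ?_⟩
    rw [map_add, map_add, map_add]
    simp only [f, g, Algebra.TensorProduct.lift_tmul, Algebra.ofId_apply]
    erw [quatRep_apply, quatRep_apply, quatRep_apply, quatRep_apply]
    ext i j
    fin_cases i <;> fin_cases j <;>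
      simp [Matrix.mul_apply, Fin.sum_univ_two, Matrix.algebraMap_matrix_apply] <;>
      (first
        | linear_combination ((n11 - n00)/2) * h
        | linear_combination (-(n01 + n10)/2) * h
        | linear_combination ((n00 - n11)/2) * h)
  have hinj : Function.Injective f := by
    have := (LinearMap.injective_iff_surjective_of_finrank_eq_finrank hfr
      (f := f.toLinearMap)).mpr (by exact hsurj)
    exact this
  exact AlgEquiv.ofBijective f ⟨hinj, hsurj⟩

set_option maxHeartbeats 3200000 in
/-- **Lemma 6.1.** Let `A = (-1,-1)_ℚ` be the rational quaternion
algebra, `K/ℚ` a field extension, and `M` the 2-dimensional `A_K`-module given by the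
representation `ρ` with `i ↦ [[a,b],[b,-a]]`, `j ↦ [[b,-a],[-a,-b]]`, where
`a² + b² = -1` in `K`.  For an intermediate field `ℚ ⊆ E ⊆ K` the following are
equivalent: (a) `M` descends to `E` (i.e. `ρ` is conjugate to a representation with
entries in `E`); (b) `A` splits over `E`; (c) there are `a₀, b₀ ∈ E` with
`a₀² + b₀² = -1`. -/
theorem quaternion_module_descends_iff
    (K : Type) [Field K] [Algebra ℚ K]
    (E : Type) [Field E] [Algebra ℚ E] [Algebra E K] [IsScalarTower ℚ E K]
    (a b : K) (hab : a ^ 2 + b ^ 2 = -1)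
    (ρ : ℍ[ℚ] →ₐ[ℚ] Matrix (Fin 2) (Fin 2) K)
    (hρi : ρ ⟨0, 1, 0, 0⟩ = !![a, b; b, -a])
    (hρj : ρ ⟨0, 0, 1, 0⟩ = !![b, -a; -a, -b]) :
    [ -- (a) `M` descends to `E`
      ∃ (σ : ℍ[ℚ] →ₐ[ℚ] Matrix (Fin 2) (Fin 2) E) (P : (Matrix (Fin 2) (Fin 2) K)ˣ),
        ∀ q : ℍ[ℚ], ρ q = (P : Matrix (Fin 2) (Fin 2) K) * (σ q).map (algebraMap E K) *
          ((P⁻¹ : (Matrix (Fin 2) (Fin 2) K)ˣ) : Matrix (Fin 2) (Fin 2) K),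
      -- (b) the quaternion algebra splits over `E`
      Nonempty ((E ⊗[ℚ] ℍ[ℚ]) ≃ₐ[E] Matrix (Fin 2) (Fin 2) E),
      -- (c) `-1` is a sum of two squares in `E`
      ∃ a₀ b₀ : E, a₀ ^ 2 + b₀ ^ 2 = -1 ].TFAE := by
  haveI : CharZero K := charZero_of_injective_algebraMap (algebraMap ℚ K).injective
  tfae_have 1 → 3
  · rintro ⟨σ, P, hP⟩
    refine sq_pair_of_anticommuting (σ quatI) (σ quatJ) ?_ ?_ ?_
    · rw [← _root_.map_mul, quatI_mul_quatI, _root_.map_neg, _root_.map_one]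
    · rw [← _root_.map_mul, quatJ_mul_quatJ, _root_.map_neg, _root_.map_one]
    · rw [← _root_.map_mul, ← _root_.map_mul, quatI_mul_quatJ_anticomm, _root_.map_neg]
  tfae_have 2 → 3
  · rintro ⟨φ⟩
    refine sq_pair_of_anticommuting (φ (1 ⊗ₜ[ℚ] quatI)) (φ (1 ⊗ₜ[ℚ] quatJ)) ?_ ?_ ?_
    · rw [← _root_.map_mul, Algebra.TensorProduct.tmul_mul_tmul, one_mul, quatI_mul_quatI,
        TensorProduct.tmul_neg, ← Algebra.TensorProduct.one_def, _root_.map_neg, _root_.map_one]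
    · rw [← _root_.map_mul, Algebra.TensorProduct.tmul_mul_tmul, one_mul, quatJ_mul_quatJ,
        TensorProduct.tmul_neg, ← Algebra.TensorProduct.one_def, _root_.map_neg, _root_.map_one]
    · rw [← _root_.map_mul, ← _root_.map_mul, Algebra.TensorProduct.tmul_mul_tmul, one_mul,
        Algebra.TensorProduct.tmul_mul_tmul, one_mul, quatI_mul_quatJ_anticomm,
        TensorProduct.tmul_neg, _root_.map_neg]
  tfae_have 3 → 2
  · rintro ⟨a₀, b₀, h⟩
    exact ⟨splitIso E a₀ b₀ h⟩
  tfae_have 3 → 1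
  · rintro ⟨a₀, b₀, h₀⟩
    refine ⟨quatRep E a₀ b₀ h₀, ?_⟩
    set α := algebraMap E K a₀ with hα
    set β := algebraMap E K b₀ with hβ
    have hαβ : α ^ 2 + β ^ 2 = -1 := by
      rw [hα, hβ, ← _root_.map_pow, ← _root_.map_pow, ← _root_.map_add, h₀, _root_.map_neg, _root_.map_one]
    -- choose the intertwining matrix
    obtain ⟨p, q, hpq1, hpq2, hdet⟩ : ∃ p q : K, (a - α) * p = (b + β) * q ∧
        (b - β) * p = -((a + α) * q) ∧ p ^ 2 + q ^ 2 ≠ 0 := by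
      by_cases hC : 1 + a * α - b * β = 0
      · refine ⟨-(a + α), b - β, by linear_combination -hab + hαβ, by ring, ?_⟩
        have h4 : (-(a + α)) ^ 2 + (b - β) ^ 2 = -4 := by
          linear_combination hab + hαβ + 2 * hC
        rw [h4]; norm_num
      · refine ⟨b + β, a - α, by ring, by linear_combination hab - hαβ, ?_⟩
        intro h0
        exact hC (by linear_combination (-1/2 : K) * h0 + (1/2 : K) * hab + (1/2 : K) * hαβ)
    have hAB : !![a, b; b, -a] * !![b, -a; -a, -b] = !![0, 1; -1, 0] := by
      ext i j
      fin_cases i <;> fin_cases j <;>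
        simp [Matrix.mul_apply, Fin.sum_univ_two] <;>
        (first | ring1 | linear_combination hab | linear_combination -hab)
    -- explicit form of ρ
    have hρ : ∀ x y z w : ℚ, ρ ⟨x, y, z, w⟩ =
        !![algebraMap ℚ K x + algebraMap ℚ K y * a + algebraMap ℚ K z * b,
           algebraMap ℚ K y * b - algebraMap ℚ K z * a + algebraMap ℚ K w;
           algebraMap ℚ K y * b - algebraMap ℚ K z * a - algebraMap ℚ K w,
           algebraMap ℚ K x - algebraMap ℚ K y * a - algebraMap ℚ K z * b] := by
      intro x y z w
      rw [quat_decomp, _root_.map_add, _root_.map_add, _root_.map_add, _root_.map_smul, _root_.map_smul, _root_.map_smul, _root_.map_smul,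
        _root_.map_one, _root_.map_mul]
      rw [show ρ quatI = !![a, b; b, -a] from hρi, show ρ quatJ = !![b, -a; -a, -b] from hρj,
        hAB]
      ext i j
      fin_cases i <;> fin_cases j <;>
        simp [Matrix.smul_apply, Matrix.one_apply] <;>
        simp [Algebra.smul_def] <;> ring
    -- explicit form of the mapped σ
    have hσ : ∀ x y z w : ℚ, (quatRep E a₀ b₀ h₀ ⟨x, y, z, w⟩).map (algebraMap E K) =
        !![algebraMap ℚ K x + algebraMap ℚ K y * α + algebraMap ℚ K z * β,
           algebraMap ℚ K y * β - algebraMap ℚ K z * α + algebraMap ℚ K w;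
           algebraMap ℚ K y * β - algebraMap ℚ K z * α - algebraMap ℚ K w,
           algebraMap ℚ K x - algebraMap ℚ K y * α - algebraMap ℚ K z * β] := by
      intro x y z w
      rw [quatRep_apply]
      ext i j
      fin_cases i <;> fin_cases j <;>
        simp [Matrix.map_apply, _root_.map_add, _root_.map_sub, _root_.map_mul, hα, hβ,
          ← IsScalarTower.algebraMap_apply]
    set Pm : Matrix (Fin 2) (Fin 2) K := !![p, q; -q, p] with hPm
    have hPu : IsUnit Pm := by
      rw [Matrix.isUnit_iff_isUnit_det]
      refine isUnit_iff_ne_zero.mpr ?_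
      rw [hPm]
      rw [Matrix.det_fin_two_of]
      intro h0
      exact hdet (by linear_combination h0)
    refine ⟨hPu.unit, ?_⟩
    have hmain : ∀ qq : ℍ[ℚ], ρ qq * Pm = Pm * (quatRep E a₀ b₀ h₀ qq).map (algebraMap E K) := by
      rintro ⟨x, y, z, w⟩
      rw [hρ, hσ]
      ext i j
      fin_cases i <;> fin_cases j <;>
        simp [Matrix.mul_apply, Fin.sum_univ_two, hPm, eq_ratCast] <;>
        (first
          | linear_combination ((y : K)) * hpq1 + ((z : K)) * hpq2
          | linear_combination ((y : K)) * hpq2 - ((z : K)) * hpq1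
          | linear_combination (-(y : K)) * hpq1 - ((z : K)) * hpq2
          | linear_combination (-(y : K)) * hpq2 + ((z : K)) * hpq1)
    intro qq
    have hunit : (hPu.unit : Matrix (Fin 2) (Fin 2) K) = Pm := hPu.unit_spec
    have key : ρ qq * (hPu.unit : Matrix (Fin 2) (Fin 2) K)
        = (hPu.unit : Matrix (Fin 2) (Fin 2) K)
          * (quatRep E a₀ b₀ h₀ qq).map (algebraMap E K) := by
      rw [hunit]; exact hmain qq
    calc ρ qq = ρ qq * ((hPu.unit : Matrix (Fin 2) (Fin 2) K)
          * ((hPu.unit⁻¹ : (Matrix (Fin 2) (Fin 2) K)ˣ) : Matrix (Fin 2) (Fin 2) K)) := by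
            rw [hPu.unit.mul_inv, mul_one]
      _ = (ρ qq * (hPu.unit : Matrix (Fin 2) (Fin 2) K))
          * ((hPu.unit⁻¹ : (Matrix (Fin 2) (Fin 2) K)ˣ) : Matrix (Fin 2) (Fin 2) K) := by
            rw [mul_assoc]
      _ = (hPu.unit : Matrix (Fin 2) (Fin 2) K) * (quatRep E a₀ b₀ h₀ qq).map (algebraMap E K)
          * ((hPu.unit⁻¹ : (Matrix (Fin 2) (Fin 2) K)ˣ) : Matrix (Fin 2) (Fin 2) K) := by
            rw [key]
  tfae_finish
end

section
/- Let S ⊆ ℙ^{r-1} be a projective variety defined over a field K, and suppose the hyperplane H given by a₁x₁ + ⋯ + a_r x_r = 0 (aᵢ ∈ K, not all zero) is an irreducible component of S. If S is defined over a subfield K₀ ⊆ K, then every ratio a_j/a_l (with a_l ≠ 0) is algebraic over K₀. -/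
open MvPolynomial

attribute [local instance] MvPolynomial.gradedAlgebra



private noncomputable def tripleEquiv (F : Type) [CommSemiring F] (n : ℕ)
    (e : Fin (n+2) ≃ Option (Option (Fin n))) :
    MvPolynomial (Fin (n+2)) F ≃ₐ[F] Polynomial (Polynomial (MvPolynomial (Fin n) F)) :=
  (renameEquiv F e).trans ((optionEquivLeft F (Option (Fin n))).trans
    (Polynomial.mapAlgEquiv (optionEquivLeft F (Fin n))))

private lemma tripleEquiv_C (F : Type) [CommSemiring F] (n : ℕ)
    (e : Fin (n+2) ≃ Option (Option (Fin n))) (k : F) :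
    tripleEquiv F n e (MvPolynomial.C k) = Polynomial.C (Polynomial.C (MvPolynomial.C k)) := by
  simp [tripleEquiv, optionEquivLeft_C]

private lemma tripleEquiv_X_none (F : Type) [CommSemiring F] (n : ℕ)
    (e : Fin (n+2) ≃ Option (Option (Fin n))) (i : Fin (n+2)) (h : e i = none) :
    tripleEquiv F n e (X i) = Polynomial.X := by
  simp [tripleEquiv, h, optionEquivLeft_X_none]

private lemma tripleEquiv_X_some_none (F : Type) [CommSemiring F] (n : ℕ)
    (e : Fin (n+2) ≃ Option (Option (Fin n))) (i : Fin (n+2)) (h : e i = some none) :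
    tripleEquiv F n e (X i) = Polynomial.C Polynomial.X := by
  simp [tripleEquiv, h, optionEquivLeft_X_some, optionEquivLeft_X_none]

private lemma tripleEquiv_X_some_some (F : Type) [CommSemiring F] (n : ℕ)
    (e : Fin (n+2) ≃ Option (Option (Fin n))) (i : Fin (n+2)) (i₂ : Fin n)
    (h : e i = some (some i₂)) :
    tripleEquiv F n e (X i) = Polynomial.C (Polynomial.C (X i₂)) := by
  simp [tripleEquiv, h, optionEquivLeft_X_some]

private lemma coeff_extract {τ K₀ K : Type} [Field K₀] [Field K] [Algebra K₀ K]
    (T : Finset ℕ) (hT : T.Nonempty) (b : ℕ → MvPolynomial τ K₀)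
    (hb : ∀ d ∈ T, b d ≠ 0) (c : K)
    (h : ∑ d ∈ T, MvPolynomial.map (algebraMap K₀ K) (b d) * MvPolynomial.C c ^ d = 0) :
    IsAlgebraic K₀ c := by
  obtain ⟨d₀, hd₀⟩ := hT
  obtain ⟨m, hm⟩ := MvPolynomial.ne_zero_iff.mp (hb d₀ hd₀)
  refine ⟨∑ d ∈ T, Polynomial.C (MvPolynomial.coeff m (b d)) * Polynomial.X ^ d, ?_, ?_⟩
  · intro h0
    apply hm
    have h1 := congrArg (fun p => Polynomial.coeff p d₀) h0
    simpa [Polynomial.finset_sum_coeff, Polynomial.coeff_C_mul, Polynomial.coeff_X_pow,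
      Finset.sum_ite_eq' T d₀, hd₀] using h1
  · have h2 := congrArg (MvPolynomial.coeff m) h
    simp only [MvPolynomial.coeff_sum, MvPolynomial.coeff_zero] at h2
    rw [map_sum]
    rw [← h2]
    refine Finset.sum_congr rfl fun d _ => ?_
    rw [← MvPolynomial.C_pow, mul_comm ((MvPolynomial.map (algebraMap K₀ K)) (b d)),
      MvPolynomial.coeff_C_mul, MvPolynomial.coeff_map]
    simp only [map_mul, map_pow, Polynomial.aeval_X, Polynomial.aeval_C]
    ring

private lemma lc_extract {τ K₀ K : Type} [Field K₀] [Field K] [Algebra K₀ K]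
    (Q₀ : Polynomial (Polynomial (MvPolynomial τ K₀))) (hQ₀ : Q₀ ≠ 0)
    (c : K) (hc : c ≠ 0) (u : MvPolynomial τ K)
    (h : Polynomial.eval (Polynomial.C (MvPolynomial.C c) * Polynomial.X + Polynomial.C u)
      (Q₀.map (Polynomial.mapRingHom (MvPolynomial.map (algebraMap K₀ K)))) = 0) :
    IsAlgebraic K₀ c := by
  set φ := MvPolynomial.map (algebraMap K₀ K) with hφdef
  have hφ : Function.Injective φ :=
    MvPolynomial.map_injective _ (algebraMap K₀ K).injective
  set w : Polynomial (MvPolynomial τ K) :=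
    Polynomial.C (MvPolynomial.C c) * Polynomial.X + Polynomial.C u with hwdef
  have hCc : (MvPolynomial.C c : MvPolynomial τ K) ≠ 0 := by
    simpa using hc
  have hw1 : w.natDegree = 1 := Polynomial.natDegree_linear hCc
  have hwlc : w.leadingCoeff = MvPolynomial.C c := Polynomial.leadingCoeff_linear hCc
  have hw0 : w ≠ 0 := fun h0 => hCc (by rw [← hwlc, h0, Polynomial.leadingCoeff_zero])
  set Q := Q₀.map (Polynomial.mapRingHom φ) with hQdef
  have hQne : Q ≠ 0 := fun h0 =>
    hQ₀ (Polynomial.map_injective _ (Polynomial.map_injective _ hφ)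
      (h0.trans (Polynomial.map_zero _).symm))
  have hsupp : Q.support.Nonempty := Polynomial.support_nonempty.mpr hQne
  set f : ℕ → ℕ := fun d => (Q.coeff d).natDegree + d with hfdef
  set N := Q.support.sup f with hN
  obtain ⟨d₀, hd₀mem, hd₀⟩ := Finset.exists_mem_eq_sup Q.support hsupp f
  have key : ∀ d ∈ Q.support, (Q.coeff d * w ^ d).coeff N
      = if f d = N then (Q.coeff d).leadingCoeff * MvPolynomial.C c ^ d else 0 := by
    intro d hd
    have hQd : Q.coeff d ≠ 0 := Polynomial.mem_support_iff.mp hd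
    have hdeg : (Q.coeff d * w ^ d).natDegree = f d := by
      rw [Polynomial.natDegree_mul hQd (pow_ne_zero _ hw0), Polynomial.natDegree_pow, hw1,
        mul_one]
    by_cases hfd : f d = N
    · rw [if_pos hfd, ← hfd, ← hdeg, Polynomial.coeff_natDegree, Polynomial.leadingCoeff_mul,
        Polynomial.leadingCoeff_pow, hwlc]
    · rw [if_neg hfd]
      exact Polynomial.coeff_eq_zero_of_natDegree_lt
        (hdeg ▸ lt_of_le_of_ne (Finset.le_sup hd) hfd)
  have h0 : ∑ d ∈ Q.support, Q.coeff d * w ^ d = 0 := by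
    rw [Polynomial.eval_eq_sum, Polynomial.sum_def] at h
    exact h
  have h2 : ∑ d ∈ Q.support, (Q.coeff d * w ^ d).coeff N = 0 := by
    rw [← Polynomial.finset_sum_coeff, h0, Polynomial.coeff_zero]
  have h3 : ∑ d ∈ Q.support,
      (if f d = N then (Q.coeff d).leadingCoeff * MvPolynomial.C c ^ d else 0) = 0 := by
    rw [← Finset.sum_congr rfl key]
    exact h2
  have h4 : ∑ d ∈ Q.support.filter (fun d => f d = N),
      (Q.coeff d).leadingCoeff * MvPolynomial.C c ^ d = 0 := by
    rw [Finset.sum_filter]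
    exact h3
  refine coeff_extract (Q.support.filter (fun d => f d = N))
    ⟨d₀, Finset.mem_filter.mpr ⟨hd₀mem, hd₀.symm⟩⟩
    (fun d => (Q₀.coeff d).leadingCoeff) (fun d hd => ?_) c ?_
  · have hQd : Q.coeff d ≠ 0 := Polynomial.mem_support_iff.mp (Finset.mem_filter.mp hd).1
    have : Q₀.coeff d ≠ 0 := fun h0 => hQd (by rw [hQdef, Polynomial.coeff_map, h0, map_zero])
    exact Polynomial.leadingCoeff_ne_zero.mpr this
  · rw [← h4]
    refine Finset.sum_congr rfl fun d _ => ?_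
    rw [hQdef, Polynomial.coeff_map, Polynomial.coe_mapRingHom,
      Polynomial.leadingCoeff_map_of_injective hφ]

/-- **Lemma 7.2.** Let `S ⊆ ℙ^{r-1}` be a projective variety over `K`
(given by a homogeneous ideal), and suppose the hyperplane
`H : a₁x₁ + ⋯ + a_r x_r = 0` is an irreducible component of `S` (i.e. the ideal of
`H` is a minimal prime over the ideal of `S`).  If `S` is defined over a subfield
`K₀ ⊆ K` (its ideal is extended from an ideal over `K₀`), then every ratio
`a_j / a_l` (with `a_l ≠ 0`) is algebraic over `K₀`. -/
theorem hyperplane_component_ratios_algebraic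
    (r : ℕ) (K₀ K : Type) [Field K₀] [Field K] [Algebra K₀ K]
    (a : Fin r → K) (ha : a ≠ 0)
    (I₀ : Ideal (MvPolynomial (Fin r) K₀))
    (hhom : I₀.IsHomogeneous (homogeneousSubmodule (Fin r) K₀))
    (hH : Ideal.span {∑ i, C (a i) * X i} ∈
      (I₀.map (MvPolynomial.map (algebraMap K₀ K))).minimalPrimes) :
    ∀ j l : Fin r, a l ≠ 0 → IsAlgebraic K₀ (a j / a l) := by
  intro j l hal
  by_cases hjl : j = l
  · subst hjl; rw [div_self hal]; exact isAlgebraic_one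
  by_cases haj : a j = 0
  · rw [haj, zero_div]; exact isAlgebraic_zero
  have hr2 : 2 ≤ r := by
    by_contra hlt
    push_neg at hlt
    interval_cases r
    · exact j.elim0
    · exact hjl (Subsingleton.elim j l)
  obtain ⟨n, rfl⟩ : ∃ n, r = n + 2 := ⟨r - 2, by omega⟩
  set φ' : MvPolynomial (Fin (n+2)) K₀ →+* MvPolynomial (Fin (n+2)) K :=
    (MvPolynomial.map (algebraMap K₀ K) :
      MvPolynomial (Fin (n+2)) K₀ →+* MvPolynomial (Fin (n+2)) K) with hφ'def
  set ff : MvPolynomial (Fin (n+2)) K := ∑ i, MvPolynomial.C (a i) * X i with hffdef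
  -- the linear form is nonzero
  have hffne : ff ≠ 0 := by
    obtain ⟨i₀, hi₀⟩ := Function.ne_iff.mp ha
    intro h0
    apply hi₀
    have h1 := congrArg (MvPolynomial.coeff (Finsupp.single i₀ 1)) h0
    simpa [hffdef, MvPolynomial.coeff_sum, MvPolynomial.coeff_C_mul, MvPolynomial.coeff_X',
      Finsupp.single_left_inj (one_ne_zero : (1:ℕ) ≠ 0), Finset.sum_ite_eq] using h1
  -- the base ideal is nonzero
  have hI₀ : I₀ ≠ ⊥ := by
    intro h0
    rw [h0, Ideal.map_bot] at hH
    have hb : Ideal.span {ff} ≤ ⊥ := hH.2 ⟨Ideal.bot_prime, bot_le⟩ bot_le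
    exact hffne (Ideal.mem_bot.mp (hb (Ideal.mem_span_singleton_self ff)))
  obtain ⟨g₀, hg₀I, hg₀⟩ := Submodule.exists_mem_ne_zero_of_ne_bot hI₀
  obtain ⟨hq, hfh⟩ : ff ∣ φ' g₀ :=
    Ideal.mem_span_singleton.mp (hH.1.2 (Ideal.mem_map_of_mem φ' hg₀I))
  -- the substitution killing the hyperplane
  set c : Fin (n+2) → K := fun i => -(a i / a l) with hcdef
  set v : Fin (n+2) → MvPolynomial (Fin (n+2)) K :=
    fun i => if i = l then ∑ i' ∈ Finset.univ.erase l, MvPolynomial.C (c i') * X i' else X i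
    with hvdef
  have hvl : v l = ∑ i' ∈ Finset.univ.erase l, MvPolynomial.C (c i') * X i' := by
    simp [hvdef]
  have hvo : ∀ i, i ≠ l → v i = X i := fun i hi => by simp [hvdef, hi]
  have hεf : MvPolynomial.aeval v ff = 0 := by
    rw [hffdef, ← Finset.add_sum_erase _ _ (Finset.mem_univ l)]
    rw [map_add, map_mul, map_sum, MvPolynomial.aeval_C, MvPolynomial.aeval_X, hvl]
    have hrest : ∀ i ∈ Finset.univ.erase l,
        (MvPolynomial.aeval v) (MvPolynomial.C (a i) * X i)
          = MvPolynomial.C (a i) * X i := by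
      intro i hi
      rw [map_mul, MvPolynomial.aeval_C, MvPolynomial.aeval_X,
        hvo i (Finset.ne_of_mem_erase hi), MvPolynomial.algebraMap_eq]
    rw [Finset.sum_congr rfl hrest, MvPolynomial.algebraMap_eq, Finset.mul_sum,
      ← Finset.sum_add_distrib]
    refine Finset.sum_eq_zero fun i _ => ?_
    have hzero : a l * c i + a i = 0 := by
      simp only [hcdef]
      field_simp
      ring
    rw [← mul_assoc, ← MvPolynomial.C_mul, ← add_mul, ← MvPolynomial.C_add, hzero,
      MvPolynomial.C_0, zero_mul]
  have hεg : MvPolynomial.aeval v (φ' g₀) = 0 := by rw [hfh, map_mul, hεf, zero_mul]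
  -- index juggling
  obtain ⟨j₁, hj₁⟩ : ∃ j₁, finSuccEquiv' l j = some j₁ := by
    rcases h : finSuccEquiv' l j with _ | j₁
    · exact absurd ((finSuccEquiv' l).injective (h.trans (finSuccEquiv'_at l).symm)) hjl
    · exact ⟨j₁, rfl⟩
  set e : Fin (n+2) ≃ Option (Option (Fin n)) :=
    (finSuccEquiv' l).trans (finSuccEquiv' j₁).optionCongr with hedef
  have hel : e l = none := by simp [hedef, finSuccEquiv'_at]
  have hej : e j = some none := by simp [hedef, hj₁, finSuccEquiv'_at]
  have hei : ∀ i, i ≠ j → i ≠ l → ∃ i₂, e i = some (some i₂) := by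
    intro i hij hil
    rcases h : e i with _ | (_ | i₂)
    · exact absurd (e.injective (h.trans hel.symm)) hil
    · exact absurd (e.injective (h.trans hej.symm)) hij
    · exact ⟨i₂, rfl⟩
  set Φ := tripleEquiv K n e with hΦdef
  set Φ₀ := tripleEquiv K₀ n e with hΦ₀def
  set z : Fin (n+2) → MvPolynomial (Fin n) K :=
    fun i => ((Φ (X i)).coeff 0).coeff 0 with hzdef
  have hz : ∀ i, i ≠ j → i ≠ l → Φ (X i) = Polynomial.C (Polynomial.C (z i)) := by
    intro i hij hil
    obtain ⟨i₂, h2⟩ := hei i hij hil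
    have h3 := tripleEquiv_X_some_some K n e i i₂ h2
    rw [hΦdef, h3]
    simp only [hzdef, hΦdef, h3, Polynomial.coeff_C_zero]
  set u : MvPolynomial (Fin n) K :=
    ∑ i ∈ (Finset.univ.erase l).erase j, MvPolynomial.C (c i) * z i with hudef
  set w : Polynomial (MvPolynomial (Fin n) K) :=
    Polynomial.C (MvPolynomial.C (c j)) * Polynomial.X + Polynomial.C u with hwdef
  have hjmem : j ∈ Finset.univ.erase l := Finset.mem_erase.mpr ⟨hjl, Finset.mem_univ j⟩
  have hΦvl : Φ (v l) = Polynomial.C w := by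
    rw [hvl, ← Finset.add_sum_erase _ _ hjmem, map_add, map_mul, map_sum]
    have hrest : ∀ i ∈ (Finset.univ.erase l).erase j,
        Φ (MvPolynomial.C (c i) * X i)
          = Polynomial.C (Polynomial.C (MvPolynomial.C (c i) * z i)) := by
      intro i hi
      have hij : i ≠ j := Finset.ne_of_mem_erase hi
      have hil : i ≠ l := Finset.ne_of_mem_erase (Finset.mem_of_mem_erase hi)
      rw [map_mul, hΦdef, tripleEquiv_C, ← hΦdef, hz i hij hil, ← Polynomial.C_mul,
        ← Polynomial.C_mul]
    rw [Finset.sum_congr rfl hrest, hΦdef, tripleEquiv_C, tripleEquiv_X_some_none K n e j hej,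
      ← map_sum Polynomial.C, ← map_sum Polynomial.C, hwdef, hudef]
    rw [← Polynomial.C_mul, ← Polynomial.C_add]
  -- the commutation identity
  have hcomm : ∀ g, Φ (MvPolynomial.aeval v g)
      = Polynomial.C (Polynomial.eval w (Φ g)) := by
    intro g
    induction g using MvPolynomial.induction_on with
    | C k =>
      rw [MvPolynomial.aeval_C, MvPolynomial.algebraMap_eq, hΦdef, tripleEquiv_C,
        Polynomial.eval_C]
    | add p q hp hq => rw [map_add, map_add, hp, hq, map_add, Polynomial.eval_add, map_add]
    | mul_X p i hp =>
      have hXi : Φ (v i) = Polynomial.C (Polynomial.eval w (Φ (X i))) := by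
        by_cases hil : i = l
        · rw [hil, hΦvl, hΦdef, tripleEquiv_X_none K n e l hel, Polynomial.eval_X]
        · rw [hvo i hil]
          by_cases hij : i = j
          · subst hij
            rw [hΦdef, tripleEquiv_X_some_none K n e i hej, Polynomial.eval_C]
          · rw [hz i hij hil, Polynomial.eval_C]
      simp only [map_mul, MvPolynomial.aeval_X, Polynomial.eval_mul, Polynomial.C_mul, hp, hXi]
  -- compatibility with the K₀-structure
  have hPQ : ∀ g : MvPolynomial (Fin (n+2)) K₀, Φ (φ' g)
      = (Φ₀ g).map (Polynomial.mapRingHom (MvPolynomial.map (algebraMap K₀ K))) := by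
    intro g
    induction g using MvPolynomial.induction_on with
    | C k =>
      rw [hφ'def, MvPolynomial.map_C, hΦdef, hΦ₀def, tripleEquiv_C, tripleEquiv_C,
        Polynomial.map_C, Polynomial.coe_mapRingHom, Polynomial.map_C, MvPolynomial.map_C]
    | add p q hp hq => rw [map_add, map_add, hp, hq, map_add, Polynomial.map_add]
    | mul_X p i hp =>
      have hXi : Φ (X i)
          = (Φ₀ (X i)).map (Polynomial.mapRingHom (MvPolynomial.map (algebraMap K₀ K))) := by
        by_cases hil : i = l
        · rw [hil, hΦdef, hΦ₀def, tripleEquiv_X_none K n e l hel,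
            tripleEquiv_X_none K₀ n e l hel, Polynomial.map_X]
        · by_cases hij : i = j
          · rw [hij, hΦdef, hΦ₀def, tripleEquiv_X_some_none K n e j hej,
              tripleEquiv_X_some_none K₀ n e j hej, Polynomial.map_C,
              Polynomial.coe_mapRingHom, Polynomial.map_X]
          · obtain ⟨i₂, h2⟩ := hei i hij hil
            rw [hΦdef, hΦ₀def, tripleEquiv_X_some_some K n e i i₂ h2,
              tripleEquiv_X_some_some K₀ n e i i₂ h2, Polynomial.map_C,
              Polynomial.coe_mapRingHom, Polynomial.map_C, MvPolynomial.map_X]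
      simp only [map_mul, Polynomial.map_mul, hp]
      rw [hφ'def, MvPolynomial.map_X, hXi]
  have hQ₀ne : Φ₀ g₀ ≠ 0 := fun h0 => hg₀ (by
    have := congrArg Φ₀.symm h0
    simpa using this)
  have heval : Polynomial.eval w
      ((Φ₀ g₀).map (Polynomial.mapRingHom (MvPolynomial.map (algebraMap K₀ K)))) = 0 := by
    have h5 := hcomm (φ' g₀)
    rw [hεg, map_zero, hPQ g₀] at h5
    exact Polynomial.C_eq_zero.mp h5.symm
  have hcj : c j ≠ 0 := by
    simp only [hcdef]
    exact neg_ne_zero.mpr (div_ne_zero haj hal)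
  rw [hwdef] at heval
  have halg : IsAlgebraic K₀ (c j) := lc_extract (Φ₀ g₀) hQ₀ne (c j) hcj u heval
  have hrw : a j / a l = -(c j) := by simp [hcdef]
  rw [hrw]
  exact isAlgebraic_iff_isIntegral.mpr ((isAlgebraic_iff_isIntegral.mp halg).neg)
end

section
/- Let F be a field of characteristic p > 0, D a finite p-group that is not cyclic, so D/Φ(D) is elementary abelian of rank r ≥ 2 with generators g₁,…,g_r. For n > 0 let K = F(t_{1,1},…,t_{n,r}) be a rational function field and for 1 ≤ i ≤ n let M_i be the 2-dimensional KD-module with g_j acting by [[1, t_{i,j}],[0,1]]. Then M_i is a module over KD/J²(KD), and its kernel, viewed inside J(KD)/J²(KD) with basis (g₁−1),…,(g_r−1), is the hyperplane H_i = {Σ_j λ_j(g_j−1) : Σ_j t_{i,j} λ_j = 0}. -/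
open MonoidAlgebra

/-- **Section 7.** Let `F` be a field of characteristic `p > 0` and
`D` a non-cyclic finite `p`-group, generated by `g₁, …, g_r` (whose images form a
basis of the rank-`r ≥ 2` elementary abelian quotient `D/Φ(D)`).  Let
`K = F(t_{1,1}, …, t_{n,r})` be a rational function field and, for `1 ≤ i ≤ n`, let
`M_i` be the 2-dimensional `KD`-module on which `g_j` acts by `[[1, t_{i,j}],[0,1]]`,
with corresponding representation `ρ i : KD → Mat₂(K)`.  Then:
(1) `J²(KD)` is contained in the kernel of `ρ i`, so `M_i` is a module over
`KD/J²(KD)`; and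
(2) inside `J(KD)/J²(KD)`, with basis the images of `(g_j − 1)`, the kernel of `M_i`
is the hyperplane `H_i = {Σ_j λ_j (g_j − 1) : Σ_j t_{i,j} λ_j = 0}`. -/
theorem kernel_of_generic_unipotent_module
    (p : ℕ) [Fact p.Prime] (F : Type) [Field F] [CharP F p]
    (D : Type) [Group D] [Fintype D] (hD : IsPGroup p D) (hnc : ¬ IsCyclic D)
    (n r : ℕ) (hn : 0 < n) (hr : 2 ≤ r)
    (g : Fin r → D) (hgen : Subgroup.closure (Set.range g) = ⊤)
    (K : Type) [Field K] [Algebra (MvPolynomial (Fin n × Fin r) F) K]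
    [IsFractionRing (MvPolynomial (Fin n × Fin r) F) K]
    (t : Fin n → Fin r → K)
    (ht : ∀ i j, t i j = algebraMap (MvPolynomial (Fin n × Fin r) F) K
      (MvPolynomial.X (i, j)))
    (ρ : Fin n → (MonoidAlgebra K D →ₐ[K] Matrix (Fin 2) (Fin 2) K))
    (hρ : ∀ i j, ρ i (MonoidAlgebra.of K D (g j)) = !![1, t i j; 0, 1]) :
    (∀ (i : Fin n) (x y : MonoidAlgebra K D),
      x ∈ (⊥ : Ideal (MonoidAlgebra K D)).jacobson →
      y ∈ (⊥ : Ideal (MonoidAlgebra K D)).jacobson → ρ i (x * y) = 0) ∧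
    (∀ (i : Fin n) (lam : Fin r → K),
      ρ i (∑ j, lam j • (MonoidAlgebra.of K D (g j) - 1)) = 0 ↔
        ∑ j, t i j * lam j = 0) := by
  classical
  -- augmentation map
  set ε : MonoidAlgebra K D →ₐ[K] K := MonoidAlgebra.lift K K D 1 with hε
  have hεof : ∀ d : D, ε (MonoidAlgebra.of K D d) = 1 := by
    intro d; simp [hε]
  -- every group element maps to a unipotent upper-triangular matrix
  have hgrp : ∀ (i : Fin n) (d : D), ∃ s : K, ρ i (MonoidAlgebra.of K D d) = !![1, s; 0, 1] := by
    intro i d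
    have hd : d ∈ Subgroup.closure (Set.range g) := by rw [hgen]; trivial
    induction hd using Subgroup.closure_induction with
    | mem x hx =>
      obtain ⟨j, rfl⟩ := hx
      exact ⟨t i j, hρ i j⟩
    | one =>
      refine ⟨0, ?_⟩
      rw [show MonoidAlgebra.of K D (1 : D) = 1 from map_one _, map_one, Matrix.one_fin_two]
    | mul x y hx hy ihx ihy =>
      obtain ⟨a, ha⟩ := ihx
      obtain ⟨b, hb⟩ := ihy
      refine ⟨a + b, ?_⟩
      rw [show MonoidAlgebra.of K D (x * y) = MonoidAlgebra.of K D x * MonoidAlgebra.of K D y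
        from map_mul _ _ _, map_mul, ha, hb]
      ext i' j'
      fin_cases i' <;> fin_cases j' <;>
        simp [Matrix.mul_apply, Fin.sum_univ_two] <;> ring
    | inv x hx ihx =>
      obtain ⟨a, ha⟩ := ihx
      refine ⟨-a, ?_⟩
      have h1 : ρ i (MonoidAlgebra.of K D x⁻¹) * ρ i (MonoidAlgebra.of K D x) = 1 := by
        rw [← map_mul, ← map_mul, inv_mul_cancel,
          show MonoidAlgebra.of K D (1 : D) = 1 from map_one _, map_one]
      have h2 : ρ i (MonoidAlgebra.of K D x) * !![1, -a; 0, 1] = 1 := by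
        rw [ha]
        ext i' j'
        fin_cases i' <;> fin_cases j' <;>
          simp [Matrix.mul_apply, Fin.sum_univ_two, Matrix.one_apply]
      calc ρ i (MonoidAlgebra.of K D x⁻¹)
          = ρ i (MonoidAlgebra.of K D x⁻¹) *
            (ρ i (MonoidAlgebra.of K D x) * !![1, -a; 0, 1]) := by rw [h2, mul_one]
        _ = !![1, -a; 0, 1] := by rw [← mul_assoc, h1, one_mul]
  -- structure of ρ i x for arbitrary x
  have key : ∀ (i : Fin n) (x : MonoidAlgebra K D),
      ρ i x 0 0 = ε x ∧ ρ i x 1 1 = ε x ∧ ρ i x 1 0 = 0 := by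
    intro i x
    induction x using MonoidAlgebra.induction_on with
    | of d =>
      obtain ⟨s, hs⟩ := hgrp i d
      rw [hs, hεof]
      refine ⟨?_, ?_, ?_⟩ <;> simp
    | add f f' hf hf' =>
      refine ⟨?_, ?_, ?_⟩
      · rw [map_add, Matrix.add_apply, hf.1, hf'.1, map_add]
      · rw [map_add, Matrix.add_apply, hf.2.1, hf'.2.1, map_add]
      · rw [map_add, Matrix.add_apply, hf.2.2, hf'.2.2, add_zero]
    | smul c f hf =>
      refine ⟨?_, ?_, ?_⟩
      · rw [map_smul, Matrix.smul_apply, hf.1, map_smul]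
      · rw [map_smul, Matrix.smul_apply, hf.2.1, map_smul]
      · rw [map_smul, Matrix.smul_apply, hf.2.2, smul_zero]
  -- jacobson radical is inside ker ε
  have hjac : ∀ x : MonoidAlgebra K D, x ∈ (⊥ : Ideal (MonoidAlgebra K D)).jacobson → ε x = 0 := by
    intro x hx
    have hmax : (RingHom.ker (ε : MonoidAlgebra K D →+* K)).IsMaximal :=
      RingHom.ker_isMaximal_of_surjective _ (fun c => ⟨algebraMap K _ c, by
        simpa using ε.commutes c⟩)
    have : (⊥ : Ideal (MonoidAlgebra K D)).jacobson ≤ RingHom.ker (ε : MonoidAlgebra K D →+* K) :=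
      sInf_le ⟨bot_le, hmax⟩
    exact this hx
  constructor
  · intro i x y hx hy
    have hx0 := hjac x hx
    have hy0 := hjac y hy
    obtain ⟨ha00, ha11, ha10⟩ := key i x
    obtain ⟨hb00, hb11, hb10⟩ := key i y
    have hA0 : ∀ a : Fin 2, ρ i x a 0 = 0 := by
      intro a
      match a with
      | 0 => rw [ha00, hx0]
      | 1 => exact ha10
    have hB1 : ∀ b : Fin 2, ρ i y 1 b = 0 := by
      intro b
      match b with
      | 0 => exact hb10
      | 1 => rw [hb11, hy0]
    rw [map_mul]
    ext i' j'
    rw [Matrix.mul_apply, Fin.sum_univ_two, hA0, hB1, zero_mul, mul_zero, add_zero]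
    simp
  · intro i lam
    have hsum : ρ i (∑ j, lam j • (MonoidAlgebra.of K D (g j) - 1))
        = !![0, ∑ j, t i j * lam j; 0, 0] := by
      rw [map_sum]
      have : ∀ j, ρ i (lam j • (MonoidAlgebra.of K D (g j) - 1))
          = !![0, t i j * lam j; 0, 0] := by
        intro j
        rw [map_smul, map_sub, hρ i j, map_one]
        ext i' j'
        fin_cases i' <;> fin_cases j' <;>
          simp [Matrix.one_apply, mul_comm]
      rw [Finset.sum_congr rfl (fun j _ => this j)]
      ext i' j'
      rw [Matrix.sum_apply]
      fin_cases i' <;> fin_cases j' <;> simp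
    rw [hsum]
    constructor
    · intro h
      have := congrFun (congrFun h 0) 1
      simpa using this
    · intro h
      rw [h]
      ext i' j'
      fin_cases i' <;> fin_cases j' <;> simp
end
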